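/- arXiv:2105.01916 — 4 statements merged into one kernel-verified Lean document; each statement's English description precedes it below -/
import Mathlib

section
/- For each r_0, ℓ ∈ ℕ with ℓ ≥ 1 and each real ε > 0, there exists a positive integer n such that every ℓ-periodic string s_1,…,s_n of length n (over any finite alphabet) contains a contiguous substring s := s_{i+1},…,s_{i+2r} of even length 2r with r ≥ r_0 such that τ(s) ≤ ε·r. -/
/-- A string is `ℓ`-periodic if every contiguous length-`ℓ` substring contains every
character occurring in the string. -/
def LPeriodic {α : Type*} (ℓ : ℕ) (s : List α) : Prop :=
  ∀ i, i + ℓ ≤ s.length → ∀ a ∈ s, a ∈ (s.drop i).take ℓ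

/-- `tau r l`: for a string `l` of length `2r`, the sum over all characters `a` of
`|hist_a(first half) - hist_a(second half)|`. -/
noncomputable def tau {α : Type*} (r : ℕ) (l : List α) : ℕ :=
  letI := Classical.decEq α
  (l.dedup.map (fun a =>
    (((l.take r).count a : ℤ) - ((l.drop r).count a : ℤ)).natAbs)).sum

noncomputable def cnt {α : Type*} [DecidableEq α] (s : List α) (i m : ℕ) (a : α) : ℝ :=
  (((s.drop i).take m).count a : ℝ)

lemma cnt_nonneg {α : Type*} [DecidableEq α] (s : List α) (i m : ℕ) (a : α) :
    0 ≤ cnt s i m a := Nat.cast_nonneg _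

lemma cnt_add {α : Type*} [DecidableEq α] (s : List α) (i m m' : ℕ) (a : α) :
    cnt s i (m + m') a = cnt s i m a + cnt s (i + m) m' a := by
  unfold cnt
  rw [List.take_add, List.count_append, List.drop_drop]
  push_cast; ring

lemma mem_A {α : Type*} [DecidableEq α] {s : List α} {i m : ℕ} {a : α}
    (h : a ∈ (s.drop i).take m) : a ∈ s.toFinset :=
  List.mem_toFinset.mpr (List.mem_of_mem_drop (List.mem_of_mem_take h))

lemma sum_cnt {α : Type*} [DecidableEq α] (s : List α) (A : Finset α)
    (hA : s.toFinset ⊆ A) (i m : ℕ) (him : i + m ≤ s.length) :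
    ∑ a ∈ A, cnt s i m a = m := by
  unfold cnt
  rw [← Nat.cast_sum]
  norm_cast
  have h1 : ∑ a ∈ A, ((s.drop i).take m).count a = ((s.drop i).take m).length := by
    rw [← List.sum_toFinset_count_eq_length]
    refine (Finset.sum_subset (fun a ha => hA (mem_A (List.mem_toFinset.mp ha))) ?_).symm
    intro a _ ha
    exact List.count_eq_zero.mpr (fun h' => ha (List.mem_toFinset.mpr h'))
  rw [h1, List.length_take, List.length_drop]
  omega

lemma tau_eq_sum {α : Type*} [inst : DecidableEq α] (A : Finset α) (r : ℕ) (l : List α)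
    (h : l.toFinset ⊆ A) :
    (tau r l : ℝ) = ∑ a ∈ A, |((l.take r).count a : ℝ) - ((l.drop r).count a : ℝ)| := by
  have hinst : Classical.decEq α = inst := by
    funext a b; exact Subsingleton.elim _ _
  unfold tau
  rw [hinst]
  have hded : l.dedup.toFinset = l.toFinset := by
    ext a; simp
  rw [Nat.cast_list_sum, List.map_map]
  have h2 : ∑ a ∈ l.toFinset, |((l.take r).count a : ℝ) - ((l.drop r).count a : ℝ)|
      = (l.dedup.map ((fun (n : ℕ) => (n : ℝ)) ∘ (fun a =>
          (((l.take r).count a : ℤ) - ((l.drop r).count a : ℤ)).natAbs))).sum := by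
    rw [← hded, List.sum_toFinset _ (List.nodup_dedup l)]
    congr 1
    refine List.map_congr_left fun a _ => ?_
    simp only [Function.comp_apply, Nat.cast_natAbs]
    push_cast
    ring_nf
  rw [← h2]
  refine Finset.sum_subset h ?_
  intro a _ ha
  have h3 : a ∉ l := fun h' => ha (List.mem_toFinset.mpr h')
  have h4 : (l.take r).count a = 0 :=
    List.count_eq_zero.mpr (fun h' => h3 (List.mem_of_mem_take h'))
  have h5 : (l.drop r).count a = 0 :=
    List.count_eq_zero.mpr (fun h' => h3 (List.mem_of_mem_drop h'))
  rw [h4, h5]; simp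

lemma tau_sub {α : Type*} [DecidableEq α] (s : List α) (A : Finset α)
    (hA : s.toFinset ⊆ A) (i m : ℕ) :
    (tau m ((s.drop i).take (2 * m)) : ℝ)
      = ∑ a ∈ A, |cnt s i m a - cnt s (i + m) m a| := by
  rw [tau_eq_sum A m _ (fun a ha => hA (mem_A (List.mem_toFinset.mp ha)))]
  refine Finset.sum_congr rfl fun a _ => ?_
  have h1 : ((s.drop i).take (2 * m)).take m = (s.drop i).take m := by
    rw [List.take_take]
    congr 1
    omega
  have h2 : ((s.drop i).take (2 * m)).drop m = (s.drop (i + m)).take m := by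
    rw [List.drop_take, List.drop_drop]
    congr 1
    omega
  rw [h1, h2]
  rfl

lemma sum_range_double (f : ℕ → ℝ) (m : ℕ) :
    ∑ j ∈ Finset.range (2 * m), f j = ∑ j ∈ Finset.range m, (f (2 * j) + f (2 * j + 1)) := by
  induction m with
  | zero => simp
  | succ m ih =>
    rw [show 2 * (m + 1) = 2 * m + 1 + 1 by ring, Finset.sum_range_succ, Finset.sum_range_succ,
      ih, Finset.sum_range_succ]
    ring

lemma telescope (f : ℕ → ℝ) (c : ℝ) : ∀ T : ℕ, (∀ t < T, f (t + 1) + c ≤ f t) →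
    f T + T * c ≤ f 0
  | 0, _ => by simp
  | (T + 1), h => by
    have h1 := telescope f c T (fun t ht => h t (by omega))
    have h2 := h T (by omega)
    push_cast
    linarith

/-- For each `r₀, ℓ ≥ 1` and `ε > 0` there is a positive `n` such that every
`ℓ`-periodic string of length `n` contains a contiguous substring of even length
`2r` with `r ≥ r₀` and `τ ≤ ε r`. -/
theorem exists_near_anagramish_substring (r₀ ℓ : ℕ) (hℓ : 1 ≤ ℓ) (ε : ℝ) (hε : 0 < ε) :
    ∃ n : ℕ, 0 < n ∧ ∀ (α : Type*) (s : List α), s.length = n → LPeriodic ℓ s →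
      ∃ i r : ℕ, r₀ ≤ r ∧ i + 2 * r ≤ s.length ∧
        (tau r ((s.drop i).take (2 * r)) : ℝ) ≤ ε * r := by
  set T : ℕ := ⌈(4 * ℓ : ℝ) / ε ^ 2⌉₊ + 1 with hTdef
  set r : ℕ := max r₀ ℓ with hrdef
  have hrℓ : ℓ ≤ r := le_max_right _ _
  have hr1 : 1 ≤ r := le_trans hℓ hrℓ
  refine ⟨2 ^ T * r, Nat.mul_pos (pow_pos (by norm_num) T) hr1, ?_⟩
  intro α s hs hper
  letI : DecidableEq α := Classical.decEq α
  by_contra hcon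
  push_neg at hcon
  set A := s.toFinset with hAdef
  have hAsub : s.toFinset ⊆ A := le_refl _
  have hl0 : (0 : ℝ) < ℓ := by exact_mod_cast hℓ
  have hr0R : (0 : ℝ) < r := by exact_mod_cast hr1
  -- alphabet size bound
  have hcard : A.card ≤ ℓ := by
    have hℓn : 0 + ℓ ≤ s.length := by
      rw [hs]
      have : ℓ ≤ 2 ^ T * r := le_trans hrℓ (Nat.le_mul_of_pos_left r
        (pow_pos (by norm_num) T))
      omega
    have h1 : A ⊆ (s.take ℓ).toFinset := by
      intro a ha
      have := hper 0 hℓn a (List.mem_toFinset.mp ha)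
      rw [List.drop_zero] at this
      exact List.mem_toFinset.mpr this
    calc A.card ≤ (s.take ℓ).toFinset.card := Finset.card_le_card h1
      _ ≤ (s.take ℓ).length := List.toFinset_card_le _
      _ ≤ ℓ := by rw [List.length_take]; exact min_le_left _ _
  -- block histograms
  set b : ℕ → ℕ → α → ℝ := fun t j a => cnt s (j * (2 ^ t * r)) (2 ^ t * r) a with hbdef
  set e : ℕ → ℕ → ℝ := fun t j => ∑ a ∈ A, (b t j a) ^ 2 with hedef
  set S : ℕ → ℝ := fun t => ∑ j ∈ Finset.range (2 ^ (T - t)), e t j with hSdef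
  have hb0 : ∀ t j a, 0 ≤ b t j a := fun t j a => cnt_nonneg _ _ _ _
  have hbadd : ∀ t j a, b (t + 1) j a = b t (2 * j) a + b t (2 * j + 1) a := by
    intro t j a
    have h1 : j * (2 ^ (t + 1) * r) = 2 * j * (2 ^ t * r) := by ring
    have h2 : (2 ^ (t + 1) * r) = 2 ^ t * r + 2 ^ t * r := by ring
    have h3 : 2 * j * (2 ^ t * r) + 2 ^ t * r = (2 * j + 1) * (2 ^ t * r) := by ring
    simp only [hbdef]
    rw [h1, h2, cnt_add, h3]
  -- the contradiction hypothesis on adjacent block pairs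
  have hD : ∀ t j, t < T → j < 2 ^ (T - t - 1) →
      ε * ((2 ^ t * r : ℕ) : ℝ) < ∑ a ∈ A, |b t (2 * j) a - b t (2 * j + 1) a| := by
    intro t j ht hj
    have hr₀ : r₀ ≤ 2 ^ t * r :=
      le_trans (le_max_left r₀ ℓ) (Nat.le_mul_of_pos_left r (pow_pos (by norm_num) t))
    have hlen2 : 2 * j * (2 ^ t * r) + 2 * (2 ^ t * r) ≤ s.length := by
      rw [hs]
      have h6 : j + 1 ≤ 2 ^ (T - t - 1) := hj
      calc 2 * j * (2 ^ t * r) + 2 * (2 ^ t * r) = (j + 1) * (2 ^ (t + 1) * r) := by ring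
        _ ≤ 2 ^ (T - t - 1) * (2 ^ (t + 1) * r) := Nat.mul_le_mul_right _ h6
        _ = 2 ^ T * r := by rw [← mul_assoc, ← pow_add]; congr 2; omega
    have hcon2 := hcon (2 * j * (2 ^ t * r)) (2 ^ t * r) hr₀ hlen2
    rw [tau_sub s A hAsub] at hcon2
    have h7 : 2 * j * (2 ^ t * r) + 2 ^ t * r = (2 * j + 1) * (2 ^ t * r) := by ring
    rw [h7] at hcon2
    simpa only [hbdef] using hcon2
  -- parallelogram identity
  have hpar : ∀ t j, 2 * (e t (2 * j) + e t (2 * j + 1)) =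
      e (t + 1) j + ∑ a ∈ A, (b t (2 * j) a - b t (2 * j + 1) a) ^ 2 := by
    intro t j
    simp only [hedef]
    rw [← Finset.sum_add_distrib, ← Finset.sum_add_distrib, Finset.mul_sum]
    refine Finset.sum_congr rfl fun a _ => ?_
    rw [hbadd]
    ring
  -- Cauchy–Schwarz
  have hCS : ∀ t j, (∑ a ∈ A, |b t (2 * j) a - b t (2 * j + 1) a|) ^ 2 ≤
      (ℓ : ℝ) * ∑ a ∈ A, (b t (2 * j) a - b t (2 * j + 1) a) ^ 2 := by
    intro t j
    have h1 := Finset.sum_mul_sq_le_sq_mul_sq A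
      (fun a => |b t (2 * j) a - b t (2 * j + 1) a|) (fun _ => 1)
    simp only [mul_one, one_pow, sq_abs, Finset.sum_const, nsmul_eq_mul] at h1
    have h2 : (∑ a ∈ A, (b t (2 * j) a - b t (2 * j + 1) a) ^ 2) * (A.card : ℝ)
        ≤ (ℓ : ℝ) * ∑ a ∈ A, (b t (2 * j) a - b t (2 * j + 1) a) ^ 2 := by
      have hcc : (A.card : ℝ) ≤ (ℓ : ℝ) := by exact_mod_cast hcard
      have hnn : 0 ≤ ∑ a ∈ A, (b t (2 * j) a - b t (2 * j + 1) a) ^ 2 :=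
        Finset.sum_nonneg fun a _ => sq_nonneg _
      nlinarith
    calc (∑ a ∈ A, |b t (2 * j) a - b t (2 * j + 1) a|) ^ 2
        ≤ (∑ a ∈ A, (b t (2 * j) a - b t (2 * j + 1) a) ^ 2) * (A.card : ℝ) := by
          simpa using h1
      _ ≤ _ := h2
  -- one level of the energy decrement
  have hstep : ∀ t, t < T →
      S (t + 1) + 2 ^ (T - t - 1) * (ε ^ 2 * ((2 ^ t * r : ℕ) : ℝ) ^ 2 / ℓ) ≤ 2 * S t := by
    intro t ht
    have hkey : ∀ j ∈ Finset.range (2 ^ (T - t - 1)),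
        e (t + 1) j + ε ^ 2 * ((2 ^ t * r : ℕ) : ℝ) ^ 2 / ℓ
          ≤ 2 * (e t (2 * j) + e t (2 * j + 1)) := by
      intro j hj
      have hD' := hD t j ht (Finset.mem_range.mp hj)
      have hCS' := hCS t j
      have hnn : 0 ≤ ∑ a ∈ A, |b t (2 * j) a - b t (2 * j + 1) a| :=
        Finset.sum_nonneg fun a _ => abs_nonneg _
      have hm0 : (0:ℝ) ≤ ε * ((2 ^ t * r : ℕ) : ℝ) := by positivity
      have h2 : (ε * ((2 ^ t * r : ℕ) : ℝ)) ^ 2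
          < (∑ a ∈ A, |b t (2 * j) a - b t (2 * j + 1) a|) ^ 2 := by nlinarith
      have h3 : ε ^ 2 * ((2 ^ t * r : ℕ) : ℝ) ^ 2 / ℓ
          ≤ ∑ a ∈ A, (b t (2 * j) a - b t (2 * j + 1) a) ^ 2 := by
        rw [div_le_iff₀ hl0]
        nlinarith
      have hp := hpar t j
      linarith
    have hsplit : S t = ∑ j ∈ Finset.range (2 ^ (T - t - 1)), (e t (2 * j) + e t (2 * j + 1)) := by
      have h8 : 2 ^ (T - t) = 2 * 2 ^ (T - t - 1) := by
        rw [← pow_succ']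
        congr 1
        omega
      simp only [hSdef]
      rw [h8, sum_range_double]
    have hS1 : S (t + 1) = ∑ j ∈ Finset.range (2 ^ (T - t - 1)), e (t + 1) j := by
      simp only [hSdef]
      congr 2
    rw [hS1, hsplit]
    calc (∑ j ∈ Finset.range (2 ^ (T - t - 1)), e (t + 1) j)
          + 2 ^ (T - t - 1) * (ε ^ 2 * ((2 ^ t * r : ℕ) : ℝ) ^ 2 / ℓ)
        = ∑ j ∈ Finset.range (2 ^ (T - t - 1)),
            (e (t + 1) j + ε ^ 2 * ((2 ^ t * r : ℕ) : ℝ) ^ 2 / ℓ) := by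
          rw [Finset.sum_add_distrib, Finset.sum_const, Finset.card_range, nsmul_eq_mul]
          push_cast
          ring
      _ ≤ ∑ j ∈ Finset.range (2 ^ (T - t - 1)), 2 * (e t (2 * j) + e t (2 * j + 1)) :=
          Finset.sum_le_sum hkey
      _ = 2 * ∑ j ∈ Finset.range (2 ^ (T - t - 1)), (e t (2 * j) + e t (2 * j + 1)) := by
          rw [Finset.mul_sum]
  -- normalized energy
  set Φ : ℕ → ℝ := fun t => S t / (2 ^ (T + t) * (r : ℝ) ^ 2) with hPdef
  have hΦstep : ∀ t < T, Φ (t + 1) + ε ^ 2 / (4 * ℓ) ≤ Φ t := by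
    intro t ht
    have hst := hstep t ht
    have hD2 : (0 : ℝ) < 2 ^ (T + t + 1) * (r : ℝ) ^ 2 := by positivity
    have e1 : Φ (t + 1) = S (t + 1) / (2 ^ (T + t + 1) * (r : ℝ) ^ 2) := by
      simp only [hPdef]
      congr 3
    have e2 : Φ t = 2 * S t / (2 ^ (T + t + 1) * (r : ℝ) ^ 2) := by
      simp only [hPdef]
      rw [pow_succ]
      field_simp
      ring
    have hexp : (2 : ℝ) ^ (T + t + 1) = 2 ^ (T - t - 1) * ((2 : ℝ) ^ t) ^ 2 * 4 := by
      have h4 : (4 : ℝ) = 2 ^ 2 := by norm_num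
      rw [h4, ← pow_mul, ← pow_add, ← pow_add]
      congr 1
      omega
    have e3 : ε ^ 2 / (4 * ℓ)
        = (2 ^ (T - t - 1) * (ε ^ 2 * ((2 ^ t * r : ℕ) : ℝ) ^ 2 / ℓ))
            / (2 ^ (T + t + 1) * (r : ℝ) ^ 2) := by
      rw [hexp]
      push_cast
      field_simp
    rw [e1, e2, e3, ← add_div]
    exact div_le_div_of_nonneg_right hst hD2.le |>.trans_eq rfl
  have hΦT : 0 ≤ Φ T := by
    apply div_nonneg _ (by positivity)
    simp only [hSdef, hedef]
    exact Finset.sum_nonneg fun j _ => Finset.sum_nonneg fun a _ => sq_nonneg _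
  have hΦ0 : Φ 0 ≤ 1 := by
    have hSb : S 0 ≤ 2 ^ T * (r : ℝ) ^ 2 := by
      have hb_le : ∀ j ∈ Finset.range (2 ^ (T - 0)), e 0 j ≤ (r : ℝ) ^ 2 := by
        intro j hj
        have hjr : j + 1 ≤ 2 ^ T := by
          have h0 := Finset.mem_range.mp hj
          rw [Nat.sub_zero] at h0
          omega
        have hlen : j * (2 ^ 0 * r) + 2 ^ 0 * r ≤ s.length := by
          rw [hs]
          have : (j + 1) * r ≤ 2 ^ T * r := Nat.mul_le_mul_right _ hjr
          simpa [pow_zero, one_mul, Nat.add_mul] using by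
            calc j * r + r = (j + 1) * r := by ring
              _ ≤ 2 ^ T * r := this
        have hsum : ∑ a ∈ A, b 0 j a = ((2 ^ 0 * r : ℕ) : ℝ) := by
          simp only [hbdef]
          exact sum_cnt s A hAsub _ _ hlen
        have hble : ∀ a ∈ A, b 0 j a ≤ (r : ℝ) := by
          intro a ha
          calc b 0 j a ≤ ∑ a ∈ A, b 0 j a := Finset.single_le_sum (fun a _ => hb0 0 j a) ha
            _ = ((2 ^ 0 * r : ℕ) : ℝ) := hsum
            _ = (r : ℝ) := by norm_num
        calc e 0 j = ∑ a ∈ A, (b 0 j a) ^ 2 := by simp only [hedef]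
          _ ≤ ∑ a ∈ A, b 0 j a * r := Finset.sum_le_sum (fun a ha => by
              have h1 := hble a ha
              have h2 := hb0 0 j a
              nlinarith)
          _ = (∑ a ∈ A, b 0 j a) * r := by rw [← Finset.sum_mul]
          _ = ((2 ^ 0 * r : ℕ) : ℝ) * r := by rw [hsum]
          _ = (r : ℝ) ^ 2 := by push_cast; ring
      calc S 0 = ∑ j ∈ Finset.range (2 ^ (T - 0)), e 0 j := by simp only [hSdef]
        _ ≤ ∑ j ∈ Finset.range (2 ^ (T - 0)), (r : ℝ) ^ 2 := Finset.sum_le_sum hb_le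
        _ = 2 ^ T * (r : ℝ) ^ 2 := by
            rw [Finset.sum_const, Finset.card_range, nsmul_eq_mul]
            push_cast
            norm_num
    simp only [hPdef]
    rw [div_le_one (by positivity)]
    simpa using hSb
  have hfin := telescope Φ (ε ^ 2 / (4 * ℓ)) T hΦstep
  have hTlb : (4 * ℓ : ℝ) / ε ^ 2 < T := by
    have h1 : (4 * ℓ : ℝ) / ε ^ 2 ≤ (⌈(4 * ℓ : ℝ) / ε ^ 2⌉₊ : ℝ) := Nat.le_ceil _
    have h2 : (T : ℝ) = (⌈(4 * ℓ : ℝ) / ε ^ 2⌉₊ : ℝ) + 1 := by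
      rw [hTdef]; push_cast; ring
    linarith
  have h9 : (4 : ℝ) * ℓ < (T : ℝ) * ε ^ 2 := by
    rw [div_lt_iff₀ (by positivity)] at hTlb
    linarith
  have h10 : (1 : ℝ) < (T : ℝ) * (ε ^ 2 / (4 * ℓ)) := by
    have h11 : (T : ℝ) * (ε ^ 2 / (4 * ℓ)) = (T : ℝ) * ε ^ 2 / (4 * ℓ) := by ring
    rw [h11]
    exact (one_lt_div (by positivity)).mpr h9
  linarith
end

section
/- Let Σ be a finite nonempty alphabet and let P be a function from finite strings over Σ to {0,1} such that: (A1) if P(s') = 0 for some contiguous substring s' of s, then P(s) = 0; and (A2) for each n ∈ ℕ there exists at least one string s over Σ of length n with P(s) = 1. Then there exist ℓ ∈ ℕ and a subset Ξ ⊆ Σ such that, for each n ∈ ℕ: (C1) there exists a string s of length n with all characters in Ξ and P(s) = 1; and (C2) every string s of length n with all characters in Ξ and P(s) = 1 is ℓ-periodic. -/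
/-- Given a `{0,1}`-valued predicate `P` on strings over a finite nonempty alphabet
such that (A1) `P s = 0` whenever `P s' = 0` for some contiguous substring `s'` of `s`,
and (A2) for each `n` there is a string of length `n` with `P s = 1`, there exist
`ℓ ∈ ℕ` and `Ξ ⊆ Σ` such that for each `n`: (C1) some string of length `n` over `Ξ`
has `P s = 1`; and (C2) every string of length `n` over `Ξ` with `P s = 1` is
`ℓ`-periodic. -/
theorem periodicity_lemma {α : Type*} [Fintype α] [Nonempty α] (P : List α → Bool)
    (hA1 : ∀ s s' : List α, s' <:+: s → P s' = false → P s = false)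
    (hA2 : ∀ n : ℕ, ∃ s : List α, s.length = n ∧ P s = true) :
    ∃ (ℓ : ℕ) (Ξ : Set α), ∀ n : ℕ,
      (∃ s : List α, s.length = n ∧ (∀ a ∈ s, a ∈ Ξ) ∧ P s = true) ∧
      (∀ s : List α, s.length = n → (∀ a ∈ s, a ∈ Ξ) → P s = true → LPeriodic ℓ s) := by
  classical
  set Good : Finset α → Prop := fun Ξ =>
    ∀ n, ∃ s : List α, s.length = n ∧ (∀ a ∈ s, a ∈ Ξ) ∧ P s = true with hGoodDef
  have hU : Good Finset.univ := by
    intro n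
    obtain ⟨s, hs, hp⟩ := hA2 n
    exact ⟨s, hs, fun a _ => Finset.mem_univ a, hp⟩
  obtain ⟨Ξ, hΞ, hmin⟩ :=
    (wellFounded_lt (α := Finset α)).has_min {Ξ | Good Ξ} ⟨Finset.univ, hU⟩
  have hΞ : Good Ξ := hΞ
  -- minimality: erasing any element breaks goodness at some length
  have key : ∀ a ∈ Ξ, ∃ m : ℕ, ∀ s : List α, s.length = m →
      (∀ b ∈ s, b ∈ Ξ.erase a) → P s = false := by
    intro a ha
    by_contra h
    push_neg at h
    refine hmin (Ξ.erase a) ?_ (Finset.erase_ssubset ha)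
    intro n
    obtain ⟨s, hs1, hs2, hs3⟩ := h n
    exact ⟨s, hs1, hs2, by simpa using hs3⟩
  have hf : ∃ f : α → ℕ, ∀ a ∈ Ξ, ∀ s : List α, s.length = f a →
      (∀ b ∈ s, b ∈ Ξ.erase a) → P s = false := by
    refine ⟨fun a => if h : a ∈ Ξ then (key a h).choose else 0, ?_⟩
    intro a ha
    simpa [dif_pos ha] using (key a ha).choose_spec
  obtain ⟨f, hf⟩ := hf
  set ℓ := Ξ.sup f with hℓ
  refine ⟨ℓ, ↑Ξ, fun n => ⟨?_, ?_⟩⟩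
  · obtain ⟨s, h1, h2, h3⟩ := hΞ n
    exact ⟨s, h1, fun a ha => h2 a ha, h3⟩
  · intro s hslen hsub hPs i hi a ha
    by_contra haw
    have haΞ : a ∈ Ξ := hsub a ha
    set w := (s.drop i).take ℓ with hw
    have hfa : f a ≤ ℓ := Finset.le_sup haΞ
    have hwlen : w.length = ℓ := by
      simp only [hw, List.length_take, List.length_drop]
      omega
    set t := w.take (f a) with ht
    have htlen : t.length = f a := by
      simp only [ht, List.length_take]
      omega
    have htw : t <+: w := List.take_prefix _ _
    have hts : t <:+: s := by
      have h1 : t <+: s.drop i := htw.trans (List.take_prefix _ _)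
      exact h1.isInfix.trans (s.drop_suffix i).isInfix
    have hchars : ∀ b ∈ t, b ∈ Ξ.erase a := by
      intro b hb
      have hbw : b ∈ w := htw.subset hb
      have hbs : b ∈ s := (hts.subset hb)
      refine Finset.mem_erase.2 ⟨?_, hsub b hbs⟩
      rintro rfl
      exact haw hbw
    have hPt : P t = false := hf a haΞ t htlen hchars
    have : P s = false := hA1 s t hts hPt
    rw [hPs] at this
    simp at this
end

section
/- Suppose that for each n ∈ ℕ the 2×n grid G_n admits an anagram-free vertex c-colouring. Then there exist ℓ ∈ ℕ and a vertex c-colouring φ* of G_4 such that, for each k ∈ ℕ, there exists an ℓ-periodic string s ∈ (Σ_{c,ℓ})^k for which φ_s is an anagram-free vertex c-colouring of G_{n_s}. -/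
def IsAnagramish {α : Type*} (l : List α) : Prop :=
  ∃ r : ℕ, 0 < r ∧ l.length = 2 * r ∧ (l.take r).Perm (l.drop r)

def AnagramFree {V : Type*} {c : ℕ} (G : SimpleGraph V) (φ : V → Fin c) : Prop :=
  ∀ l : List V, l.Chain' G.Adj → l.Nodup → ¬ IsAnagramish (l.map φ)

def grid (m n : ℕ) : SimpleGraph (Fin m × Fin n) :=
  (SimpleGraph.pathGraph m).boxProd (SimpleGraph.pathGraph n)

def SymAlpha (c ℓ : ℕ) : Type :=
  Σ k : Fin ℓ, (Fin 2 × Fin (4 * (k.val + 1)) → Fin c)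

def boringCols {c : ℕ} (φstar : Fin 2 × Fin 4 → Fin c) : List (Fin 2 → Fin c) :=
  (List.finRange 4).map (fun j i => φstar (i, j))

def colourfulCols {c ℓ : ℕ} (a : SymAlpha c ℓ) : List (Fin 2 → Fin c) :=
  (List.finRange (4 * (a.1.val + 1))).map (fun j i => a.2 (i, j))

def colsOf {c ℓ : ℕ} (φstar : Fin 2 × Fin 4 → Fin c) (s : List (SymAlpha c ℓ)) :
    List (Fin 2 → Fin c) :=
  (s.map (fun a => boringCols φstar ++ colourfulCols a)).flatten

def phiOfSym {c ℓ : ℕ} (φstar : Fin 2 × Fin 4 → Fin c) (s : List (SymAlpha c ℓ)) :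
    Fin 2 × Fin (colsOf φstar s).length → Fin c :=
  fun v => (colsOf φstar s).get ⟨v.2.val, v.2.isLt⟩ v.1

/-! ### Auxiliary machinery -/

private lemma anagramFree_shift {c a m n : ℕ} (hmn : a + m ≤ n)
    (φ : Fin 2 × Fin n → Fin c) (hφ : AnagramFree (grid 2 n) φ) :
    AnagramFree (grid 2 m) (fun v => φ (v.1,
      ⟨a + v.2.val, lt_of_lt_of_le (Nat.add_lt_add_left v.2.isLt a) hmn⟩)) := by
  intro l hcl hnd hana
  set f : Fin 2 × Fin m → Fin 2 × Fin n := fun v => (v.1,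
      ⟨a + v.2.val, lt_of_lt_of_le (Nat.add_lt_add_left v.2.isLt a) hmn⟩) with hf
  refine hφ (l.map f) ?_ ?_ ?_
  · simp only [List.Chain'] at hcl ⊢; rw [List.isChain_map]
    refine hcl.imp ?_
    intro u v huv
    simp only [grid, SimpleGraph.boxProd_adj, SimpleGraph.pathGraph_adj, hf,
      Fin.ext_iff] at huv ⊢
    omega
  · refine hnd.map ?_
    intro u v huv
    simp only [hf, Prod.mk.injEq, Fin.mk.injEq] at huv
    exact Prod.ext huv.1 (Fin.ext (by omega))
  · rw [List.map_map]
    exact hana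

private def colFun {c : ℕ} (x : ℕ → Fin 8 → Fin 2 → Fin c) (j : ℕ) : Fin 2 → Fin c :=
  x (j / 8) ⟨j % 8, Nat.mod_lt _ (by norm_num)⟩

private def colPhi {c : ℕ} (x : ℕ → Fin 8 → Fin 2 → Fin c) (n : ℕ) :
    Fin 2 × Fin n → Fin c := fun v => colFun x v.2.val v.1

private def shiftW {c : ℕ} (x : ℕ → Fin 8 → Fin 2 → Fin c) :
    ℕ → Fin 8 → Fin 2 → Fin c := fun t => x (t + 1)

private lemma colFun_congr' {c : ℕ} (x y : ℕ → Fin 8 → Fin 2 → Fin c) {a b : ℕ}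
    (h1 : x (a / 8) = y (b / 8)) (h2 : a % 8 = b % 8) : colFun x a = colFun y b := by
  unfold colFun; rw [h1]; exact congrArg _ (Fin.ext h2)

private lemma colFun_spec {c : ℕ} (x : ℕ → Fin 8 → Fin 2 → Fin c) (t z : ℕ) (hz : z < 8) :
    colFun x (8 * t + z) = x t ⟨z, hz⟩ := by
  unfold colFun
  rw [show (8 * t + z) / 8 = t by omega]
  exact congrArg _ (Fin.ext (by simp; omega))

private lemma colFun_shift {c : ℕ} (x : ℕ → Fin 8 → Fin 2 → Fin c) (j : ℕ) :
    colFun (shiftW x) j = colFun x (8 + j) :=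
  colFun_congr' _ _ (congrArg x (by omega)) (by omega)

private lemma colPhi_congr {c n : ℕ} {x y : ℕ → Fin 8 → Fin 2 → Fin c}
    (hagree : ∀ t, t < n → x t = y t) : colPhi x n = colPhi y n := by
  funext v
  unfold colPhi colFun
  rw [hagree _ (lt_of_le_of_lt (Nat.div_le_self _ _) v.2.isLt)]

private def mkSym (c ℓ : ℕ) (d : ℕ) (hd : d < ℓ) (f : ℕ → Fin 2 → Fin c) :
    SymAlpha c ℓ := ⟨⟨d, hd⟩, fun v => f v.2.val v.1⟩

private lemma mkSym_congr {c ℓ : ℕ} {d1 d2 : ℕ} (hdd : d1 = d2) {h1 : d1 < ℓ}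
    {h2 : d2 < ℓ} {f g : ℕ → Fin 2 → Fin c}
    (hfg : ∀ y, y < 4 * (d1 + 1) → f y = g y) :
    mkSym c ℓ d1 h1 f = mkSym c ℓ d2 h2 g := by
  subst hdd
  exact congrArg (Sigma.mk _) (funext fun v => congrFun (hfg v.2.val v.2.isLt) v.1)

private lemma boringCols_length {c : ℕ} (φ : Fin 2 × Fin 4 → Fin c) :
    (boringCols φ).length = 4 := by simp [boringCols]

private lemma colourfulCols_length {c ℓ : ℕ} (a : SymAlpha c ℓ) :
    (colourfulCols a).length = 4 * (a.1.val + 1) := by simp [colourfulCols]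

private lemma boringCols_getElem {c : ℕ} (φ : Fin 2 × Fin 4 → Fin c) (j : ℕ)
    (hj : j < 4) (hl : j < (boringCols φ).length) :
    (boringCols φ)[j] = fun i => φ (i, ⟨j, hj⟩) := by
  simp only [boringCols, List.getElem_map, List.getElem_finRange]
  rfl

private lemma colourfulCols_getElem {c ℓ : ℕ} (a : SymAlpha c ℓ) (j : ℕ)
    (hj : j < 4 * (a.1.val + 1)) (hl : j < (colourfulCols a).length) :
    (colourfulCols a)[j] = fun i => a.2 (i, ⟨j, hj⟩) := by
  simp only [colourfulCols, List.getElem_map, List.getElem_finRange]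
  rfl

/-- If every `2 × n` grid admits an anagram-free vertex `c`-colouring, then there are
`ℓ ∈ ℕ` and a colouring `φ*` of `G₄` such that for each `k` there is an `ℓ`-periodic
string `s ∈ (Σ_{c,ℓ})^k` for which `φ_s` is an anagram-free colouring of `G_{n_s}`. -/
theorem block_colouring (c : ℕ)
    (h : ∀ n : ℕ, ∃ φ : Fin 2 × Fin n → Fin c, AnagramFree (grid 2 n) φ) :
    ∃ (ℓ : ℕ) (φstar : Fin 2 × Fin 4 → Fin c), ∀ k : ℕ,
      ∃ s : List (SymAlpha c ℓ), s.length = k ∧ LPeriodic ℓ s ∧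
        AnagramFree (grid 2 (colsOf φstar s).length) (phiOfSym φstar s) := by
  classical
  have hc0 : 0 < c := by
    obtain ⟨φ1, -⟩ := h 1
    exact (φ1 (0, ⟨0, one_pos⟩)).pos
  -- the K sets
  set K : ℕ → Set (ℕ → Fin 8 → Fin 2 → Fin c) :=
    fun n => {x | AnagramFree (grid 2 n) (colPhi x n)} with hK
  have hKanti : ∀ {n m : ℕ}, n ≤ m → K m ⊆ K n := by
    intro n m hnm x hx
    show AnagramFree (grid 2 n) (colPhi x n)
    have h2 := anagramFree_shift (show 0 + n ≤ m by omega) (colPhi x m) hx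
    convert h2 using 1
    funext v
    show colFun x v.2.val v.1 = colFun x (0 + v.2.val) v.1
    rw [zero_add]
  have hshiftK : ∀ x, (∀ n, x ∈ K n) → ∀ n, shiftW x ∈ K n := by
    intro x hx n
    show AnagramFree (grid 2 n) (colPhi (shiftW x) n)
    have h2 := anagramFree_shift (show 8 + n ≤ n + 8 by omega) (colPhi x (n + 8)) (hx (n + 8))
    convert h2 using 1
    funext v
    show colFun (shiftW x) v.2.val v.1 = colFun x (8 + v.2.val) v.1
    rw [colFun_shift]
  have hKne : ∀ n, (K n).Nonempty := by
    intro n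
    obtain ⟨φn, hφn⟩ := h n
    set x0 : ℕ → Fin 8 → Fin 2 → Fin c := fun t j =>
      if h8 : 8 * t + j.val < n then (fun i => φn (i, ⟨8 * t + j.val, h8⟩))
      else (fun _ => ⟨0, hc0⟩) with hx0
    refine ⟨x0, ?_⟩
    show AnagramFree (grid 2 n) (colPhi x0 n)
    have heq : colPhi x0 n = φn := by
      funext v
      have hlt : 8 * (v.2.val / 8) + v.2.val % 8 < n := by
        have := v.2.isLt; omega
      show x0 (v.2.val / 8) ⟨v.2.val % 8, Nat.mod_lt _ (by norm_num)⟩ v.1 = φn v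
      rw [hx0]
      simp only
      rw [dif_pos hlt]
      exact congrArg φn (Prod.ext rfl (Fin.ext (by simp; omega)))
    rw [heq]
    exact hφn
  -- open cylinders
  have cylOpen : ∀ (m' : ℕ) (f : ℕ → ℕ) (g : ℕ → (Fin 8 → Fin 2 → Fin c)),
      IsOpen {x : ℕ → Fin 8 → Fin 2 → Fin c | ∀ j, j < m' → x (f j) = g j} := by
    intro m' f g
    have he : {x : ℕ → Fin 8 → Fin 2 → Fin c | ∀ j, j < m' → x (f j) = g j}
        = ⋂ j : Fin m', (fun x : ℕ → Fin 8 → Fin 2 → Fin c => x (f j.val)) ⁻¹' {g j.val} := by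
      ext x
      simp only [Set.mem_setOf_eq, Set.mem_iInter, Set.mem_preimage, Set.mem_singleton_iff]
      exact ⟨fun hx j => hx j.val j.isLt, fun hx j hj => hx ⟨j, hj⟩⟩
    rw [he]
    exact isOpen_iInter_of_finite fun j =>
      (continuous_apply (f j.val)).isOpen_preimage _ (isOpen_discrete _)
  have detOpen : ∀ (n : ℕ) (P : (ℕ → Fin 8 → Fin 2 → Fin c) → Prop),
      (∀ x y, (∀ t, t < n → x t = y t) → P x → P y) → IsOpen {x | P x} := by
    intro n P hdet
    have he : {x | P x} = ⋃ y ∈ {x | P x},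
        {x : ℕ → Fin 8 → Fin 2 → Fin c | ∀ j, j < n → x j = y j} := by
      ext x
      simp only [Set.mem_setOf_eq, Set.mem_iUnion]
      exact ⟨fun hx => ⟨x, hx, fun j hj => rfl⟩,
        fun ⟨y, hy, ha⟩ => hdet y x (fun t ht => (ha t ht).symm) hy⟩
    rw [he]
    exact isOpen_biUnion fun y _ => cylOpen n (fun j => j) y
  have hKclosed : ∀ n, IsClosed (K n) := by
    intro n
    rw [← isOpen_compl_iff]
    refine detOpen n (fun x => x ∉ K n) ?_
    intro x y hagree hx hy
    apply hx
    show AnagramFree (grid 2 n) (colPhi x n)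
    rw [colPhi_congr (fun t ht => hagree t ht)]
    exact hy
  -- Omega
  have hΩne : (⋂ n, K n).Nonempty := by
    refine IsCompact.nonempty_iInter_of_directed_nonempty_isCompact_isClosed K ?_ hKne
      (fun n => (hKclosed n).isCompact) hKclosed
    intro a b
    exact ⟨max a b, hKanti (le_max_left a b), hKanti (le_max_right a b)⟩
  set Ω : Set (ℕ → Fin 8 → Fin 2 → Fin c) := ⋂ n, K n with hΩ
  have hΩclosed : IsClosed Ω := isClosed_iInter hKclosed
  have hΩinv : ∀ x ∈ Ω, shiftW x ∈ Ω := by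
    intro x hx
    exact Set.mem_iInter.mpr fun n => hshiftK x (fun n' => Set.mem_iInter.mp hx n') n
  -- Zorn
  set S : Set (Set (ℕ → Fin 8 → Fin 2 → Fin c)) :=
    {M | M.Nonempty ∧ IsClosed M ∧ (∀ x ∈ M, shiftW x ∈ M) ∧ M ⊆ Ω} with hS
  have hchain : ∀ cs ⊆ S, IsChain (· ⊆ ·) cs → cs.Nonempty →
      ∃ lb ∈ S, ∀ s ∈ cs, lb ⊆ s := by
    intro cs hcsS hch hne
    refine ⟨⋂₀ cs, ⟨?_, ?_, ?_, ?_⟩, fun s hs => Set.sInter_subset_of_mem hs⟩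
    · rw [Set.sInter_eq_iInter]
      haveI : Nonempty cs := hne.to_subtype
      refine IsCompact.nonempty_iInter_of_directed_nonempty_isCompact_isClosed _ ?_
        (fun A => (hcsS A.2).1) (fun A => (hcsS A.2).2.1.isCompact)
        (fun A => (hcsS A.2).2.1)
      rintro ⟨A1, hA1⟩ ⟨A2, hA2⟩
      rcases eq_or_ne A1 A2 with rfl | hne12
      · exact ⟨⟨A1, hA1⟩, subset_rfl, subset_rfl⟩
      · rcases hch hA1 hA2 hne12 with h12 | h21
        · exact ⟨⟨A1, hA1⟩, subset_rfl, h12⟩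
        · exact ⟨⟨A2, hA2⟩, h21, subset_rfl⟩
    · exact isClosed_sInter fun A hA => (hcsS hA).2.1
    · intro x hx
      exact Set.mem_sInter.mpr fun A hA => (hcsS hA).2.2.1 x (Set.mem_sInter.mp hx A hA)
    · obtain ⟨A0, hA0⟩ := hne
      exact (Set.sInter_subset_of_mem hA0).trans (hcsS hA0).2.2.2
  obtain ⟨M, hMsubΩ, hMmin⟩ := zorn_superset_nonempty S hchain Ω
    ⟨hΩne, hΩclosed, hΩinv, subset_rfl⟩
  obtain ⟨⟨U, hUM⟩, hMclosed, hMinv, hMΩ⟩ := hMmin.1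
  have hMmin2 : ∀ V ∈ S, V ⊆ M → M ⊆ V := fun V hV hVM => hMmin.2 hV hVM
  -- shifts of U lie in M
  have hUshift : ∀ s : ℕ, (fun t => U (s + t)) ∈ M := by
    intro s
    induction s with
    | zero =>
        have : (fun t => U (0 + t)) = U := funext fun t => by rw [zero_add]
        rw [this]; exact hUM
    | succ s ih =>
        have : (fun t => U (s + 1 + t)) = shiftW (fun t => U (s + t)) :=
          funext fun t => congrArg U (by omega)
        rw [this]; exact hMinv _ ih
  -- uniform recurrence
  have hrec : ∀ (m' p : ℕ), ∃ L, ∀ s, ∃ q, s ≤ q ∧ q + m' ≤ s + L ∧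
      ∀ j, j < m' → U (q + j) = U (p + j) := by
    intro m' p
    have claim1 : ∀ x ∈ M, ∃ q, ∀ j, j < m' → x (q + j) = U (p + j) := by
      by_contra hcon
      push_neg at hcon
      obtain ⟨x0, hx0M, hx0⟩ := hcon
      set V : Set (ℕ → Fin 8 → Fin 2 → Fin c) :=
        {x | x ∈ M ∧ ∀ q, ∃ j, j < m' ∧ x (q + j) ≠ U (p + j)} with hV
      have hVS : V ∈ S := by
        refine ⟨⟨x0, hx0M, hx0⟩, ?_, ?_, fun x hx => hMΩ hx.1⟩
        · have hVeq : V = M ∩ (⋃ q : ℕ,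
              {x : ℕ → Fin 8 → Fin 2 → Fin c | ∀ j, j < m' → x (q + j) = U (p + j)})ᶜ := by
            ext x
            simp only [hV, Set.mem_setOf_eq, Set.mem_inter_iff, Set.mem_compl_iff,
              Set.mem_iUnion, not_exists]
            constructor
            · rintro ⟨h1, h2⟩
              refine ⟨h1, fun q hq => ?_⟩
              obtain ⟨j, hj, hje⟩ := h2 q
              exact hje (hq j hj)
            · rintro ⟨h1, h2⟩
              refine ⟨h1, fun q => ?_⟩
              have := h2 q
              push_neg at this
              obtain ⟨j, hj, hje⟩ := this
              exact ⟨j, hj, hje⟩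
          rw [hVeq]
          exact hMclosed.inter (IsOpen.isClosed_compl (isOpen_iUnion fun q =>
            cylOpen m' (fun j => q + j) (fun j => U (p + j))))
        · rintro x ⟨hxM, hxno⟩
          refine ⟨hMinv x hxM, fun q => ?_⟩
          obtain ⟨j, hj, hje⟩ := hxno (q + 1)
          refine ⟨j, hj, ?_⟩
          have : shiftW x (q + j) = x (q + 1 + j) := congrArg x (by omega)
          rw [this]
          exact hje
      have hMsubV : M ⊆ V := hMmin2 V hVS (fun x hx => hx.1)
      obtain ⟨j, hj, hje⟩ := (hMsubV hUM).2 p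
      exact hje rfl
    have hcover : M ⊆ ⋃ q : ℕ,
        {x : ℕ → Fin 8 → Fin 2 → Fin c | ∀ j, j < m' → x (q + j) = U (p + j)} := by
      intro x hx
      obtain ⟨q, hq⟩ := claim1 x hx
      exact Set.mem_iUnion.mpr ⟨q, hq⟩
    obtain ⟨Q, hQ⟩ := (hMclosed.isCompact).elim_finite_subcover _
      (fun q => cylOpen m' (fun j => q + j) (fun j => U (p + j))) hcover
    refine ⟨Q.sup id + m' + 1, ?_⟩
    intro s
    have hx := hQ (hUshift s)
    simp only [Set.mem_iUnion] at hx
    obtain ⟨q, hqQ, hq⟩ := hx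
    have hqle : q ≤ Q.sup id := Finset.le_sup (f := id) hqQ
    refine ⟨s + q, Nat.le_add_right s q, by omega, ?_⟩
    intro j hj
    calc U (s + q + j) = U (s + (q + j)) := congrArg U (by omega)
      _ = U (p + j) := hq j hj
  -- occurrences of the letter a0 = U 0
  obtain ⟨R0, hR0⟩ := hrec 1 0
  have hex : ∀ p : ℕ, ∃ q, p < q ∧ q ≤ p + R0 ∧ U q = U 0 := by
    intro p
    obtain ⟨q, h1, h2, h3⟩ := hR0 (p + 1)
    have h4 := h3 0 one_pos
    simp only [add_zero] at h4
    exact ⟨q, by omega, by omega, h4⟩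
  set tseq : ℕ → ℕ := fun i => Nat.rec 0 (fun _ prev => Nat.find (hex prev)) i with htseq
  have ht0 : tseq 0 = 0 := rfl
  have htsucc : ∀ i, tseq (i + 1) = Nat.find (hex (tseq i)) := fun i => rfl
  have htlt : ∀ i, tseq i < tseq (i + 1) := fun i => by
    rw [htsucc]; exact (Nat.find_spec (hex (tseq i))).1
  have htR : ∀ i, tseq (i + 1) ≤ tseq i + R0 := fun i => by
    rw [htsucc]; exact (Nat.find_spec (hex (tseq i))).2.1
  have ht00 : ∀ i, U (tseq i) = U 0 := by
    intro i
    cases i with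
    | zero => rfl
    | succ i => rw [htsucc]; exact (Nat.find_spec (hex (tseq i))).2.2
  have htmin : ∀ i q, tseq i < q → q < tseq (i + 1) → U q ≠ U 0 := by
    intro i q h1 h2 hq
    have h3 := htR i
    rw [htsucc] at h2 h3
    exact Nat.find_min (hex (tseq i)) h2 ⟨h1, by omega, hq⟩
  have htge : ∀ i, i ≤ tseq i := by
    intro i
    induction i with
    | zero => exact Nat.zero_le _
    | succ i ih => have := htlt i; omega
  have htadd : ∀ i d, tseq i + d ≤ tseq (i + d) := by
    intro i d
    induction d with
    | zero => simp
    | succ d ih =>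
        have h1 := htlt (i + d)
        have h2 : tseq (i + (d + 1)) = tseq (i + d + 1) := by rw [Nat.add_succ]
        omega
  have hposition : ∀ q, U q = U 0 → ∃ i, tseq i = q := by
    intro q hq
    set P : ℕ → Prop := fun j => tseq j ≤ q with hP
    have hP0 : P 0 := by rw [hP]; simp [ht0]
    set j0 := Nat.findGreatest P q with hj0
    have hPj0 : P j0 := Nat.findGreatest_spec (Nat.zero_le q) hP0
    rcases eq_or_lt_of_le (Nat.findGreatest_le q : j0 ≤ q) with heq | hlt
    · refine ⟨j0, le_antisymm hPj0 ?_⟩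
      calc q = j0 := heq.symm
        _ ≤ tseq j0 := htge j0
    · have hnP : ¬ P (j0 + 1) :=
        Nat.findGreatest_is_greatest (Nat.lt_succ_self j0) (by omega)
      rcases eq_or_lt_of_le (hPj0 : tseq j0 ≤ q) with heq2 | hlt2
      · exact ⟨j0, heq2⟩
      · have : tseq (j0 + 1) > q := by
          by_contra hle
          exact hnP (by rw [hP]; omega)
        exact absurd hq (htmin j0 q hlt2 this)
  -- uniform recurrence for all factors of length R0+1
  obtain ⟨L2, hL2⟩ : ∃ L2, ∀ p s, ∃ q, s ≤ q ∧ q + (R0 + 1) ≤ s + L2 ∧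
      ∀ j, j < R0 + 1 → U (q + j) = U (p + j) := by
    have main : ∀ F : Fin (R0 + 1) → (Fin 8 → Fin 2 → Fin c), ∃ L, ∀ p,
        (∀ j : Fin (R0 + 1), U (p + j.val) = F j) → ∀ s, ∃ q, s ≤ q ∧
        q + (R0 + 1) ≤ s + L ∧ ∀ j, j < R0 + 1 → U (q + j) = U (p + j) := by
      intro F
      by_cases hF : ∃ p, ∀ j : Fin (R0 + 1), U (p + j.val) = F j
      · obtain ⟨p0, hp0⟩ := hF
        obtain ⟨L, hL⟩ := hrec (R0 + 1) p0
        refine ⟨L, fun p hp s => ?_⟩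
        obtain ⟨q, h1, h2, h3⟩ := hL s
        refine ⟨q, h1, h2, fun j hj => ?_⟩
        rw [h3 j hj, hp0 ⟨j, hj⟩, ← hp ⟨j, hj⟩]
      · exact ⟨0, fun p hp => absurd ⟨p, hp⟩ hF⟩
    choose Lf hLf using main
    refine ⟨Finset.univ.sup Lf, fun p s => ?_⟩
    obtain ⟨q, h1, h2, h3⟩ := hLf (fun j => U (p + j.val)) p (fun j => rfl) s
    have h4 : Lf (fun j => U (p + j.val)) ≤ Finset.univ.sup Lf :=
      Finset.le_sup (Finset.mem_univ _)
    exact ⟨q, h1, by omega, h3⟩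
  -- the data
  set ℓ0 : ℕ := L2 + 2 * R0 + 2 with hℓ0
  set φs : Fin 2 × Fin 4 → Fin c :=
    fun v => U 0 ⟨v.2.val, Nat.lt_of_lt_of_le v.2.isLt (by norm_num)⟩ v.1 with hφs
  have hd : ∀ i, 2 * (tseq (i + 1) - tseq i) - 2 < ℓ0 := by
    intro i
    have h1 := htlt i
    have h2 := htR i
    omega
  set sym : ℕ → SymAlpha c ℓ0 :=
    fun i => mkSym c ℓ0 _ (hd i) (fun y => colFun U (8 * tseq i + 4 + y)) with hsym
  have hAFall : ∀ n, AnagramFree (grid 2 n) (colPhi U n) :=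
    fun n => Set.mem_iInter.mp (hMΩ hUM) n
  -- key list computation
  have hcols : ∀ k : ℕ,
      colsOf φs ((List.range k).map sym) = (List.range (8 * tseq k)).map (colFun U) := by
    intro k
    induction k with
    | zero => simp [colsOf, ht0]
    | succ k ih =>
        have hΔ1 := htlt k
        have hΔR := htR k
        have happ : ∀ (s1 s2 : List (SymAlpha c ℓ0)),
            colsOf φs (s1 ++ s2) = colsOf φs s1 ++ colsOf φs s2 := by
          intro s1 s2; simp [colsOf]
        rw [List.range_succ, List.map_append, happ, ih]
        rw [show 8 * tseq (k + 1) = 8 * tseq k + (8 * tseq (k + 1) - 8 * tseq k) by omega,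
          List.range_add, List.map_append, List.map_map]
        congr 1
        simp only [List.map_cons, List.map_nil]
        have hsingle : colsOf φs [sym k] = boringCols φs ++ colourfulCols (sym k) := by
          simp [colsOf]
        rw [hsingle]
        have hsymval : (sym k).1.val = 2 * (tseq (k + 1) - tseq k) - 2 := rfl
        apply List.ext_getElem
        · simp only [List.length_append, boringCols_length, colourfulCols_length,
            List.length_map, List.length_range, hsymval]
          omega
        · intro j h1 h2
          simp only [List.getElem_map, List.getElem_range, Function.comp_apply]
          by_cases hj4 : j < 4
          · rw [List.getElem_append_left (by rw [boringCols_length]; omega)]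
            rw [boringCols_getElem φs j hj4]
            rw [colFun_spec U (tseq k) j (by omega), ht00 k]
          · have hb4 : (boringCols φs).length ≤ j := by rw [boringCols_length]; omega
            rw [List.getElem_append_right hb4]
            have hjlt : j - (boringCols φs).length < 4 * ((sym k).1.val + 1) := by
              rw [boringCols_length, hsymval]
              simp only [List.length_append, boringCols_length, colourfulCols_length,
                List.length_map, List.length_range, hsymval] at h1
              omega
            rw [colourfulCols_getElem (sym k) _ hjlt]
            show (fun i => colFun U (8 * tseq k + 4 + (j - (boringCols φs).length)) i)
              = colFun U (8 * tseq k + j)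
            rw [show 8 * tseq k + 4 + (j - (boringCols φs).length) = 8 * tseq k + j by
              rw [boringCols_length]; omega]
  -- conclusion
  refine ⟨ℓ0, φs, fun k => ?_⟩
  refine ⟨(List.range k).map sym, by simp, ?_, ?_⟩
  · -- LPeriodic
    intro i0 hi0 a ha
    rw [List.length_map, List.length_range] at hi0
    obtain ⟨i, hik, hai⟩ : ∃ i, i < k ∧ sym i = a := by
      obtain ⟨i, hi, hs⟩ := List.mem_map.mp ha
      exact ⟨i, List.mem_range.mp hi, hs⟩
    obtain ⟨q, hq1, hq2, hq3⟩ := hL2 (tseq i) (tseq i0)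
    have hqa0 : U q = U 0 := by
      have h5 := hq3 0 (by omega)
      simp only [add_zero] at h5
      rw [h5, ht00 i]
    obtain ⟨j', hj'⟩ := hposition q hqa0
    subst hj'
    have hΔi1 : 1 ≤ tseq (i + 1) - tseq i := by have := htlt i; omega
    have hΔiR : tseq (i + 1) - tseq i ≤ R0 := by have := htR i; omega
    have hnext : tseq (j' + 1) = tseq j' + (tseq (i + 1) - tseq i) := by
      have hUd : U (tseq j' + (tseq (i + 1) - tseq i)) = U 0 := by
        have h6 := hq3 (tseq (i + 1) - tseq i) (by omega)
        refine h6.trans ((congrArg U (show tseq i + (tseq (i + 1) - tseq i) = tseq (i + 1)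
          from by have := htlt i; omega)).trans (ht00 (i + 1)))
      have hle : tseq (j' + 1) ≤ tseq j' + (tseq (i + 1) - tseq i) := by
        rw [htsucc]
        exact Nat.find_min' _ ⟨by omega, by omega, hUd⟩
      rcases eq_or_lt_of_le hle with heq | hlt'
      · exact heq
      · exfalso
        have hgt := htlt j'
        have h7 := htlt i
        have hint : U (tseq (j' + 1)) = U (tseq i + (tseq (j' + 1) - tseq j')) := by
          have h8 := hq3 (tseq (j' + 1) - tseq j') (by omega)
          exact (congrArg U (show tseq (j' + 1) = tseq j' + (tseq (j' + 1) - tseq j')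
            from by omega)).trans h8
        refine htmin i (tseq i + (tseq (j' + 1) - tseq j')) (by omega) (by omega) ?_
        rw [← hint]
        exact ht00 (j' + 1)
    have hsm : StrictMono tseq := strictMono_nat_of_lt_succ htlt
    have hj'ge : i0 ≤ j' := by
      by_contra hlt
      push_neg at hlt
      have := hsm hlt
      omega
    have hj'le : j' ≤ i0 + L2 := by
      by_contra hgt
      push_neg at hgt
      have h1 := htadd i0 (j' - i0)
      have h3 : tseq (i0 + (j' - i0)) = tseq j' := by
        congr 1
        omega
      omega
    have hj'k : j' < k := by omega
    have hsymeq : sym j' = sym i := by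
      rw [hsym]
      simp only
      refine mkSym_congr (by omega) ?_
      intro y hy
      refine colFun_congr' U U ?_ (by omega)
      rw [show (8 * tseq j' + 4 + y) / 8 = tseq j' + (4 + y) / 8 by omega,
        show (8 * tseq i + 4 + y) / 8 = tseq i + (4 + y) / 8 by omega]
      exact hq3 _ (by omega)
    have hlen2 : ((((List.range k).map sym).drop i0).take ℓ0).length = ℓ0 := by
      simp only [List.length_take, List.length_drop, List.length_map, List.length_range]
      omega
    have hidx : j' - i0 < ((((List.range k).map sym).drop i0).take ℓ0).length := by
      rw [hlen2]; omega
    have hgetel : ((((List.range k).map sym).drop i0).take ℓ0)[j' - i0] = sym j' := by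
      rw [List.getElem_take, List.getElem_drop, List.getElem_map, List.getElem_range]
      exact congrArg sym (by omega)
    rw [← hai, ← hsymeq, ← hgetel]
    exact List.getElem_mem hidx
  · -- anagram-free
    have hphi : phiOfSym φs ((List.range k).map sym)
        = colPhi U ((colsOf φs ((List.range k).map sym)).length) := by
      funext v
      show (colsOf φs ((List.range k).map sym)).get ⟨v.2.val, v.2.isLt⟩ v.1
        = colFun U v.2.val v.1
      rw [List.get_eq_getElem, List.getElem_of_eq (hcols k), List.getElem_map,
        List.getElem_range]
    rw [hphi]
    exact hAFall _
end

section
/- Suppose that for each n ∈ ℕ the 2×n grid G_n admits an anagram-free vertex c-colouring. Then there exist ℓ ∈ ℕ and a vertex c-colouring φ* of G_4 such that, for each r_0 ∈ ℕ and each real ε > 0, there exist an integer r ≥ r_0 and a string s = s_1,…,s_{2r} ∈ (Σ_{c,ℓ})^{2r} with τ(s) ≤ ε·r such that φ_s is an anagram-free vertex c-colouring of G_{n_s}. -/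
instance NAG_instFintypeSymAlpha (c ℓ : ℕ) : Fintype (SymAlpha c ℓ) := by
  unfold SymAlpha; infer_instance

lemma NAG_colsOf_append {c ℓ : ℕ} (p : Fin 2 × Fin 4 → Fin c)
    (l1 l2 : List (SymAlpha c ℓ)) :
    colsOf p (l1 ++ l2) = colsOf p l1 ++ colsOf p l2 := by
  unfold colsOf; rw [List.map_append, List.flatten_append]

lemma NAG_colsOf_single {c ℓ : ℕ} (p : Fin 2 × Fin 4 → Fin c) (a : SymAlpha c ℓ) :
    colsOf p [a] = boringCols p ++ colourfulCols a := by
  unfold colsOf; simp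

lemma NAG_range_map_split {β : Type*} (x y : ℕ) (f : ℕ → β) :
    (List.range (x+y)).map f = (List.range x).map f ++ (List.range y).map (fun q => f (x + q)) := by
  rw [List.range_add, List.map_append, List.map_map]
  rfl

lemma NAG_anagramFree_comp {V W : Type*} {c : ℕ} {G : SimpleGraph V} {H : SimpleGraph W}
    (e : V → W) (hinj : Function.Injective e)
    (hadj : ∀ u v, G.Adj u v → H.Adj (e u) (e v))
    {φ : W → Fin c} (hφ : AnagramFree H φ) : AnagramFree G (φ ∘ e) := by
  intro l hc hn hana
  refine hφ (l.map e) ?_ (hn.map hinj) ?_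
  · exact (List.isChain_map e).2 (hc.imp (fun a b hab => hadj a b hab))
  · rwa [List.map_map]

lemma NAG_sum_count_univ {α : Type*} [Fintype α] [DecidableEq α] (l : List α) :
    ∑ a : α, l.count a = l.length := by
  induction l with
  | nil => simp
  | cons x t ih =>
      simp only [List.count_cons, List.length_cons, Finset.sum_add_distrib, ih]
      simp

lemma NAG_finRange_map_eq_range_map {n : ℕ} {β : Type*} (f : Fin n → β) (g : ℕ → β)
    (hfg : ∀ j : Fin n, f j = g j.val) :
    (List.finRange n).map f = (List.range n).map g := by
  apply List.ext_getElem
  · simp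
  · intro idx h1 h2
    simp only [List.getElem_map, List.getElem_finRange, List.getElem_range]
    rw [hfg]
    simp


noncomputable def NAG_cnt {α : Type*} (w : List α) (j len : ℕ) (a : α) : ℕ :=
  letI := Classical.decEq α
  ((w.drop j).take len).count a

noncomputable def NAG_T {α : Type*} [Fintype α] (w : List α) (j m : ℕ) : ℕ :=
  ∑ a : α, ((NAG_cnt w j m a : ℤ) - (NAG_cnt w (j+m) m a : ℤ)).natAbs

noncomputable def NAG_Phi {α : Type*} [Fintype α] (w : List α) (j len : ℕ) : ℝ :=
  (∑ a : α, (NAG_cnt w j len a : ℝ)^2) / (len : ℝ)^2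

lemma NAG_cnt_add {α : Type*} (w : List α) (j x y : ℕ) (a : α) :
    NAG_cnt w j (x + y) a = NAG_cnt w j x a + NAG_cnt w (j + x) y a := by
  letI := Classical.decEq α
  unfold NAG_cnt
  rw [List.take_add, List.count_append, List.drop_drop]

lemma NAG_sum_count_univ' {α : Type*} [Fintype α] (l : List α) :
    letI := Classical.decEq α
    ∑ a : α, l.count a = l.length := by
  letI := Classical.decEq α
  induction l with
  | nil => simp
  | cons x t ih =>
      simp only [List.count_cons, List.length_cons, Finset.sum_add_distrib, ih]
      simp

lemma NAG_sum_cnt {α : Type*} [Fintype α] (w : List α) (j len : ℕ) (h : j + len ≤ w.length) :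
    ∑ a : α, NAG_cnt w j len a = len := by
  letI := Classical.decEq α
  unfold NAG_cnt
  rw [NAG_sum_count_univ']
  rw [List.length_take, List.length_drop]
  omega

lemma NAG_Phi_nonneg {α : Type*} [Fintype α] (w : List α) (j len : ℕ) :
    0 ≤ NAG_Phi w j len := by
  unfold NAG_Phi; positivity

lemma NAG_Phi_le_one {α : Type*} [Fintype α] (w : List α) (j len : ℕ)
    (h : j + len ≤ w.length) : NAG_Phi w j len ≤ 1 := by
  rcases Nat.eq_zero_or_pos len with h0 | hpos
  · subst h0; unfold NAG_Phi; simp [NAG_cnt]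
  have hb : ∀ a : α, NAG_cnt w j len a ≤ len := by
    intro a
    calc NAG_cnt w j len a ≤ ∑ b : α, NAG_cnt w j len b :=
          Finset.single_le_sum (fun _ _ => Nat.zero_le _) (Finset.mem_univ a)
      _ = len := NAG_sum_cnt w j len h
  have hsum : ∑ a : α, (NAG_cnt w j len a : ℝ)^2 ≤ (len : ℝ)^2 := by
    calc ∑ a : α, (NAG_cnt w j len a : ℝ)^2
        ≤ ∑ a : α, (NAG_cnt w j len a : ℝ) * (len : ℝ) := by
          apply Finset.sum_le_sum
          intro a _
          rw [sq]
          apply mul_le_mul_of_nonneg_left _ (by positivity)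
          exact_mod_cast hb a
      _ = (∑ a : α, (NAG_cnt w j len a : ℝ)) * (len : ℝ) := by rw [Finset.sum_mul]
      _ = (len : ℝ) * (len : ℝ) := by
          congr 1
          rw [← Nat.cast_sum]
          exact_mod_cast congrArg (Nat.cast (R := ℝ)) (NAG_sum_cnt w j len h)
      _ = (len : ℝ)^2 := by ring
  unfold NAG_Phi
  rw [div_le_one (by positivity)]
  exact hsum

lemma NAG_step {α : Type*} [Fintype α] (w : List α) (j m : ℕ) (hm : 0 < m) :
    NAG_Phi w j (2*m) + ((NAG_T w j m : ℝ))^2 / (4 * (Fintype.card α) * (m:ℝ)^2)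
      ≤ max (NAG_Phi w j m) (NAG_Phi w (j+m) m) := by
  classical
  set A : ℕ := Fintype.card α with hA
  set x : α → ℝ := fun a => (NAG_cnt w j m a : ℝ)
  set y : α → ℝ := fun a => (NAG_cnt w (j+m) m a : ℝ)
  have hsplit : ∀ a : α, (NAG_cnt w j (2*m) a : ℝ) = x a + y a := by
    intro a
    have := NAG_cnt_add w j m m a
    rw [two_mul]
    rw [this]
    push_cast
    rfl
  have hT : (NAG_T w j m : ℝ) = ∑ a : α, |x a - y a| := by
    unfold NAG_T
    push_cast
    apply Finset.sum_congr rfl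
    intro a _
    rw [Nat.cast_natAbs]
    push_cast
    rfl
  have hcauchy : (NAG_T w j m : ℝ)^2 ≤ (A : ℝ) * ∑ a : α, (x a - y a)^2 := by
    rw [hT]
    have := Finset.sum_mul_sq_le_sq_mul_sq Finset.univ (fun a : α => |x a - y a|) (fun _ => (1:ℝ))
    simp only [mul_one, one_pow] at this
    calc (∑ a : α, |x a - y a|)^2 ≤ (∑ a : α, |x a - y a|^2) * ∑ _a : α, (1:ℝ) := this
      _ = (A : ℝ) * ∑ a : α, (x a - y a)^2 := by
          rw [Finset.sum_const]
          simp only [sq_abs]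
          rw [mul_comm]
          simp [hA]
  -- identity : sum x^2 + sum y^2 = (sum (x+y)^2 + sum (x-y)^2)/2
  have hid : ∑ a : α, (x a)^2 + ∑ a : α, (y a)^2
      = ((∑ a : α, (x a + y a)^2) + ∑ a : α, (x a - y a)^2) / 2 := by
    rw [← Finset.sum_add_distrib, ← Finset.sum_add_distrib]
    rw [eq_div_iff (by norm_num : (2:ℝ) ≠ 0), Finset.sum_mul]
    apply Finset.sum_congr rfl
    intro a _
    ring
  have hAge : (1:ℝ) ≤ (A:ℝ) ∨ (A = 0) := by
    rcases Nat.eq_zero_or_pos A with h0 | h1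
    · exact Or.inr h0
    · exact Or.inl (by exact_mod_cast h1)
  have hmR : (0:ℝ) < (m:ℝ) := by exact_mod_cast hm
  have hmax : (NAG_Phi w j m + NAG_Phi w (j+m) m) / 2 ≤ max (NAG_Phi w j m) (NAG_Phi w (j+m) m) := by
    rcases le_total (NAG_Phi w j m) (NAG_Phi w (j+m) m) with hle | hle
    · rw [max_eq_right hle]; linarith
    · rw [max_eq_left hle]; linarith
  refine le_trans ?_ hmax
  unfold NAG_Phi
  rcases hAge with hA1 | hA0
  · have key : ((NAG_T w j m : ℝ))^2 / (4 * (A:ℝ) * (m:ℝ)^2)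
        ≤ (∑ a : α, (x a - y a)^2) / (4 * (m:ℝ)^2) := by
      rw [div_le_div_iff₀ (by positivity) (by positivity)]
      calc (NAG_T w j m : ℝ)^2 * (4 * (m:ℝ)^2)
          ≤ ((A : ℝ) * ∑ a : α, (x a - y a)^2) * (4 * (m:ℝ)^2) := by
            apply mul_le_mul_of_nonneg_right hcauchy (by positivity)
        _ = (∑ a : α, (x a - y a)^2) * (4 * (A:ℝ) * (m:ℝ)^2) := by ring
    refine le_trans (add_le_add_right key _) ?_
    apply le_of_eq
    have h2m : ((2*m : ℕ) : ℝ) = 2 * (m:ℝ) := by push_cast; ring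
    have hre : (∑ a : α, (NAG_cnt w j (2*m) a : ℝ)^2) = ∑ a : α, (x a + y a)^2 := by
      apply Finset.sum_congr rfl; intro a _; rw [hsplit]
    rw [hre, h2m]
    have e1 : (2*(m:ℝ))^2 = 4*(m:ℝ)^2 := by ring
    rw [e1, ← add_div, ← add_div, hid]
    rw [div_div, div_div]
    congr 1
    try ring
  · -- A = 0 : α empty, sums are 0
    have hempty : (Finset.univ : Finset α) = ∅ := by
      rw [← Finset.card_eq_zero]; simpa [hA] using hA0
    have hT0 : NAG_T w j m = 0 := by unfold NAG_T; rw [hempty]; simp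
    simp [hT0, hempty]
    try positivity

lemma NAG_dyadic {α : Type*} [Fintype α] (ε : ℝ) (hε : 0 < ε) (r₁ : ℕ) (hr₁ : 0 < r₁) :
    ∃ K : ℕ, ∀ w : List α, 2^K * r₁ ≤ w.length →
      ∃ i r : ℕ, r₁ ≤ r ∧ i + 2*r ≤ w.length ∧ ((NAG_T w i r : ℝ) ≤ ε * r) := by
  classical
  set A : ℕ := Fintype.card α with hA
  set δ : ℝ := ε^2 / (4 * ((A:ℝ)+1)) with hδdef
  have hδ : 0 < δ := by positivity
  refine ⟨⌈(1:ℝ)/δ⌉₊ + 1, ?_⟩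
  set K : ℕ := ⌈(1:ℝ)/δ⌉₊ + 1 with hK
  intro w hw
  by_contra hcon
  push_neg at hcon
  have main : ∀ q, q ≤ K →
      ∃ st, st + 2^(K-q) * r₁ ≤ w.length ∧ (q : ℝ) * δ ≤ NAG_Phi w st (2^(K-q) * r₁) := by
    intro q hq
    induction q with
    | zero =>
        refine ⟨0, by simpa using hw, ?_⟩
        simpa using NAG_Phi_nonneg w 0 (2^(K-0) * r₁)
    | succ q ih =>
        obtain ⟨st, hst, hPhi⟩ := ih (by omega)
        have hKq : K - q = (K - (q+1)) + 1 := by omega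
        set m : ℕ := 2^(K - (q+1)) * r₁ with hm
        have hm0 : 0 < m := by positivity
        have hlen : 2^(K-q) * r₁ = 2 * m := by rw [hKq, pow_succ, hm]; ring
        have hst2 : st + 2 * m ≤ w.length := by rw [← hlen]; exact hst
        have hr : r₁ ≤ m := by
          rw [hm]; exact Nat.le_mul_of_pos_left r₁ (by positivity)
        have hTbig : ε * m < (NAG_T w st m : ℝ) := hcon st m hr hst2
        have hmR : (0:ℝ) < (m:ℝ) := by exact_mod_cast hm0
        have hApos : 0 < A := by
          rcases Nat.eq_zero_or_pos A with hA0 | hApos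
          · exfalso
            have hempty : (Finset.univ : Finset α) = ∅ := by
              rw [← Finset.card_eq_zero]; simpa [hA] using hA0
            have hT0 : NAG_T w st m = 0 := by unfold NAG_T; rw [hempty]; simp
            rw [hT0] at hTbig
            simp only [Nat.cast_zero] at hTbig
            nlinarith
          · exact hApos
        have hAR : (0:ℝ) < (A:ℝ) := by exact_mod_cast hApos
        have hT2 : ε^2 * (m:ℝ)^2 ≤ ((NAG_T w st m : ℝ))^2 := by
          have h0 : 0 ≤ ε * (m:ℝ) := by positivity
          nlinarith [hTbig, h0]
        have hTd : δ ≤ ((NAG_T w st m : ℝ))^2 / (4 * (A:ℝ) * (m:ℝ)^2) := by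
          rw [hδdef, div_le_div_iff₀ (by positivity) (by positivity)]
          nlinarith [hT2, sq_nonneg ((NAG_T w st m : ℝ))]
        have hstep := NAG_step w st m hm0
        have hPhi2 : ((q:ℝ)+1) * δ ≤ max (NAG_Phi w st m) (NAG_Phi w (st+m) m) := by
          rw [hlen] at hPhi
          calc ((q:ℝ)+1) * δ = (q:ℝ) * δ + δ := by ring
            _ ≤ NAG_Phi w st (2*m) + ((NAG_T w st m : ℝ))^2 / (4 * (A:ℝ) * (m:ℝ)^2) :=
                add_le_add hPhi hTd
            _ ≤ _ := by
                have : (4 * ((Fintype.card α):ℝ) * (m:ℝ)^2) = (4 * (A:ℝ) * (m:ℝ)^2) := by rw [← hA]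
                rw [← this] at hstep ⊢
                exact hstep
        rcases max_cases (NAG_Phi w st m) (NAG_Phi w (st+m) m) with ⟨hmx, -⟩ | ⟨hmx, -⟩
        · refine ⟨st, by omega, ?_⟩
          rw [hmx] at hPhi2
          push_cast
          exact hPhi2
        · refine ⟨st + m, by omega, ?_⟩
          rw [hmx] at hPhi2
          push_cast
          exact hPhi2
  obtain ⟨st, hst, hPhi⟩ := main K le_rfl
  have h1 : NAG_Phi w st (2^(K-K) * r₁) ≤ 1 := NAG_Phi_le_one w st _ hst
  have h2 : (1:ℝ)/δ ≤ (⌈(1:ℝ)/δ⌉₊ : ℝ) := Nat.le_ceil _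
  have h3 : 1 + δ ≤ (K:ℝ) * δ := by
    have hKr : (K:ℝ) = (⌈(1:ℝ)/δ⌉₊ : ℝ) + 1 := by rw [hK]; push_cast; ring
    rw [hKr]
    have : (1/δ) * δ = 1 := div_mul_cancel₀ 1 (ne_of_gt hδ)
    nlinarith
  nlinarith


def NAG_GoodRun {Pat : Type*} (b : ℕ → Pat) (p : Pat) (G R : ℕ) : Prop :=
  ∃ t : ℕ → ℕ, (∀ j, j ≤ R → b (t j) = p) ∧ ∀ j, j < R → t j < t (j+1) ∧ t (j+1) ≤ t j + G

lemma NAG_exists_good {Pat : Type*} [Fintype Pat] (b : ℕ → Pat) :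
    ∃ p G, ∀ R, NAG_GoodRun b p G R := by
  classical
  by_contra hcon
  push_neg at hcon
  -- hcon : ∀ p G, ∃ R, ¬ NAG_GoodRun b p G R
  have main : ∀ S : Finset Pat, ∀ T, ∃ x, ∀ k, k < T → b (x + k) ∉ S := by
    intro S
    induction S using Finset.induction_on with
    | empty => intro T; exact ⟨0, by simp⟩
    | @insert p S hp ih =>
        intro T
        rcases Nat.eq_zero_or_pos T with hT0 | hT
        · exact ⟨0, by omega⟩
        obtain ⟨R₀, hR₀⟩ := hcon p T
        obtain ⟨x, hx⟩ := ih ((R₀ + 2) * T)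
        by_cases hfree : ∃ y, x ≤ y ∧ y + T ≤ x + (R₀+2)*T ∧ ∀ k, k < T → b (y + k) ≠ p
        · obtain ⟨y, hy1, hy2, hy3⟩ := hfree
          refine ⟨y, fun k hk => ?_⟩
          rw [Finset.mem_insert]
          rintro (h1 | h2)
          · exact hy3 k hk h1
          · refine hx (y - x + k) (by omega) ?_
            have : x + (y - x + k) = y + k := by omega
            rw [this]
            exact h2
        · push_neg at hfree
          -- hfree : ∀ y, x ≤ y → y + T ≤ x + (R₀+2)*T → ∃ k, k < T ∧ b (y + k) = p
          have next : ∀ y, x ≤ y → y + T ≤ x + (R₀+2)*T → ∃ z, y ≤ z ∧ z < y + T ∧ b z = p := by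
            intro y h1 h2
            obtain ⟨k, hk, hbk⟩ := hfree y h1 h2
            exact ⟨y + k, by omega, by omega, hbk⟩
          exfalso
          apply hR₀
          -- build the run
          have hc0 : x ≤ x ∧ x + T ≤ x + (R₀+2)*T := ⟨le_refl x, by nlinarith⟩
          let t : ℕ → ℕ := fun j => Nat.rec
            (Classical.choose (next x hc0.1 hc0.2))
            (fun _ prev => if h : x ≤ prev + 1 ∧ prev + 1 + T ≤ x + (R₀+2)*T
              then Classical.choose (next (prev+1) h.1 h.2) else 0) j
          have ht0 : t 0 = Classical.choose (next x hc0.1 hc0.2) := rfl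
          have htsucc : ∀ j, t (j+1) = if h : x ≤ t j + 1 ∧ t j + 1 + T ≤ x + (R₀+2)*T
              then Classical.choose (next (t j + 1) h.1 h.2) else 0 := fun j => rfl
          -- invariant
          have inv : ∀ j, j ≤ R₀ → (x ≤ t j ∧ t j < x + (j+1)*T ∧ b (t j) = p) := by
            intro j
            induction j with
            | zero =>
                intro _
                have hspec := Classical.choose_spec (next x hc0.1 hc0.2)
                rw [← ht0] at hspec
                exact ⟨hspec.1, by omega, hspec.2.2⟩
            | succ j ihj =>
                intro hj
                obtain ⟨h1, h2, h3⟩ := ihj (by omega)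
                have hcnd : x ≤ t j + 1 ∧ t j + 1 + T ≤ x + (R₀+2)*T := by
                  constructor
                  · omega
                  · have : (j+1)*T + T ≤ (R₀+2)*T := by
                      have : j + 2 ≤ R₀ + 2 := by omega
                      calc (j+1)*T + T = (j+2)*T := by ring
                        _ ≤ (R₀+2)*T := Nat.mul_le_mul_right T this
                    omega
                have hspec := Classical.choose_spec (next (t j + 1) hcnd.1 hcnd.2)
                rw [htsucc j, dif_pos hcnd]
                refine ⟨by omega, ?_, hspec.2.2⟩
                have : t (j+1) = Classical.choose (next (t j + 1) hcnd.1 hcnd.2) := by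
                  rw [htsucc j, dif_pos hcnd]
                have h4 := hspec.2.1
                have h5 : (j+1+1)*T = (j+1)*T + T := by ring
                omega
          refine ⟨t, fun j hj => (inv j hj).2.2, fun j hj => ?_⟩
          obtain ⟨h1, h2, h3⟩ := inv j (by omega)
          have hcnd : x ≤ t j + 1 ∧ t j + 1 + T ≤ x + (R₀+2)*T := by
            constructor
            · omega
            · have : (j+1)*T + T ≤ (R₀+2)*T := by
                have hj2 : j + 2 ≤ R₀ + 2 := by omega
                calc (j+1)*T + T = (j+2)*T := by ring
                  _ ≤ (R₀+2)*T := Nat.mul_le_mul_right T hj2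
              omega
          have hspec := Classical.choose_spec (next (t j + 1) hcnd.1 hcnd.2)
          have heq : t (j+1) = Classical.choose (next (t j + 1) hcnd.1 hcnd.2) := by
            rw [htsucc j, dif_pos hcnd]
          rw [heq]
          exact ⟨by omega, by omega⟩
  obtain ⟨x, hx⟩ := main Finset.univ 1
  exact hx 0 one_pos (Finset.mem_univ _)


lemma NAG_tau_le_T {α : Type*} [Fintype α] (w : List α) (i r : ℕ) :
    tau r ((w.drop i).take (2*r)) ≤ NAG_T w i r := by
  letI := Classical.decEq α
  set s : List α := (w.drop i).take (2*r) with hs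
  have h1 : s.take r = (w.drop i).take r := by
    rw [hs, List.take_take]
    congr 1
    omega
  have h2 : s.drop r = (w.drop (i+r)).take r := by
    rw [hs, List.drop_take, List.drop_drop]
    congr 1
    omega
  unfold tau NAG_T NAG_cnt
  simp only [h1, h2]
  rw [← List.sum_toFinset _ (List.nodup_dedup s)]
  exact Finset.sum_le_sum_of_subset (Finset.subset_univ _)

/-- If every `2 × n` grid admits an anagram-free vertex `c`-colouring, then there are
`ℓ ∈ ℕ` and a colouring `φ*` of `G₄` such that for each `r₀` and `ε > 0` there exist
`r ≥ r₀` and `s ∈ (Σ_{c,ℓ})^{2r}` with `τ(s) ≤ ε r` for which `φ_s` is an anagram-free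
colouring of `G_{n_s}`. -/
theorem near_anagram_graph (c : ℕ)
    (h : ∀ n : ℕ, ∃ φ : Fin 2 × Fin n → Fin c, AnagramFree (grid 2 n) φ) :
    ∃ (ℓ : ℕ) (φstar : Fin 2 × Fin 4 → Fin c),
      ∀ (r₀ : ℕ) (ε : ℝ), 0 < ε →
        ∃ r : ℕ, r₀ ≤ r ∧ ∃ s : List (SymAlpha c ℓ), s.length = 2 * r ∧
          (tau r s : ℝ) ≤ ε * r ∧
          AnagramFree (grid 2 (colsOf φstar s).length) (phiOfSym φstar s) := by
  classical
  rcases Nat.eq_zero_or_pos c with hc0 | hc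
  · exfalso
    obtain ⟨φ, -⟩ := h 1
    subst hc0
    exact (φ ((0 : Fin 2), (0 : Fin 1))).elim0
  have hAF : ∀ n, AnagramFree (grid 2 n) ((h n).choose) := fun n => (h n).choose_spec
  let ψ : ℕ → Fin 2 × ℕ → Fin c := fun n v =>
    if hv : v.2 < n then (h n).choose (v.1, ⟨v.2, hv⟩) else ⟨0, hc⟩
  let U : Ultrafilter ℕ := Filter.hyperfilter ℕ
  have hlim : ∀ v : Fin 2 × ℕ, ∃ a : Fin c, {n | ψ n v = a} ∈ U := by
    intro v
    by_contra hno
    push_neg at hno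
    have hcompl : ∀ a : Fin c, {n | ψ n v = a}ᶜ ∈ U := fun a =>
      Ultrafilter.compl_mem_iff_notMem.2 (hno a)
    have hint : (⋂ a : Fin c, {n | ψ n v = a}ᶜ) ∈ U := Filter.iInter_mem.2 hcompl
    obtain ⟨n, hn⟩ := Ultrafilter.nonempty_of_mem hint
    simp only [Set.mem_iInter, Set.mem_compl_iff, Set.mem_setOf_eq] at hn
    exact hn (ψ n v) rfl
  choose φI hφI using hlim
  let b : ℕ → (Fin 2 × Fin 4 → Fin c) := fun tidx v => φI (v.1, 4 * tidx + v.2.val)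
  obtain ⟨p, G, hGood⟩ := NAG_exists_good b
  have hG1 : 1 ≤ G := by
    obtain ⟨t, -, hg⟩ := hGood 1
    have := hg 0 one_pos
    omega
  refine ⟨2*G, p, ?_⟩
  intro r₀ ε hε
  haveI : Nonempty (SymAlpha c (2*G)) := ⟨⟨⟨0, by omega⟩, fun _ => ⟨0, hc⟩⟩⟩
  set r₁ : ℕ := max r₀ 1 with hr₁def
  have hr₁ : 0 < r₁ := by omega
  obtain ⟨K, hdy⟩ := NAG_dyadic (α := SymAlpha c (2*G)) ε hε r₁ hr₁
  set m : ℕ := 2^K * r₁ with hmdef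
  have hm0 : 0 < m := by positivity
  obtain ⟨t, htp, htg⟩ := hGood (2*m)
  let u : ℕ → ℕ := fun j => t (2*j)
  have hustep : ∀ j, j < m → u j + 2 ≤ u (j+1) ∧ u (j+1) ≤ u j + 2*G := by
    intro j hj
    have h1 := htg (2*j) (by omega)
    have h2 := htg (2*j+1) (by omega)
    have e : 2*(j+1) = 2*j+1+1 := by ring
    constructor
    · show t (2*j) + 2 ≤ t (2*(j+1))
      rw [e]; omega
    · show t (2*(j+1)) ≤ t (2*j) + 2*G
      rw [e]; omega
  have hubp : ∀ j, j ≤ m → b (u j) = p := fun j hj => htp (2*j) (by omega)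
  have humono : ∀ d j, j + d ≤ m → u j ≤ u (j + d) := by
    intro d
    induction d with
    | zero => intro j _; simp
    | succ d ihd =>
        intro j hj
        have h1 : u j ≤ u (j + d) := ihd j (by omega)
        have h2 := (hustep (j + d) (by omega)).1
        have e : j + (d+1) = (j + d) + 1 := by ring
        rw [e]
        omega
  let ksym : ℕ → Fin (2*G) := fun j => ⟨min (u (j+1) - u j - 2) (2*G - 1), by omega⟩
  let sym : ℕ → SymAlpha c (2*G) := fun j =>
    ⟨ksym j, fun v => φI (v.1, 4 * u j + 4 + v.2.val)⟩
  have hks : ∀ j, j < m → (ksym j).val = u (j+1) - u j - 2 := by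
    intro j hj
    have := hustep j hj
    show min (u (j+1) - u j - 2) (2*G - 1) = u (j+1) - u j - 2
    omega
  let W : List (SymAlpha c (2*G)) := (List.range m).map sym
  have hWlen : W.length = m := by simp [W]
  obtain ⟨i, r, hrge, hi2r, hT⟩ := hdy W (by rw [hWlen])
  rw [hWlen] at hi2r
  set s : List (SymAlpha c (2*G)) := (W.drop i).take (2*r) with hsdef
  have hslen : s.length = 2*r := by
    rw [hsdef, List.length_take, List.length_drop, hWlen]
    omega
  have htau : (tau r s : ℝ) ≤ ε * r := by
    refine le_trans ?_ hT
    exact_mod_cast NAG_tau_le_T W i r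
  -- column reconstruction
  have hWget : ∀ q, i + q < m → (W.drop i)[q]? = some (sym (i+q)) := by
    intro q hq
    rw [List.getElem?_drop]
    show ((List.range m).map sym)[i+q]? = some (sym (i+q))
    rw [List.getElem?_map, List.getElem?_range (by omega)]
    rfl
  have hchunk : ∀ j, j < m → boringCols p ++ colourfulCols (sym j)
      = (List.range (4 * (u (j+1) - u j))).map (fun col i2 => φI (i2, 4 * u j + col)) := by
    intro j hj
    have hg2 := hustep j hj
    have hkv := hks j hj
    have hb : boringCols p = (List.range 4).map (fun col i2 => φI (i2, 4 * u j + col)) := by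
      unfold boringCols
      apply NAG_finRange_map_eq_range_map
      intro jj
      funext i2
      rw [← hubp j (le_of_lt hj)]
    have hcf : colourfulCols (sym j)
        = (List.range (4 * (u (j+1) - u j) - 4)).map
            (fun col i2 => φI (i2, 4 * u j + 4 + col)) := by
      unfold colourfulCols
      have hlen4 : 4 * (((sym j).1).val + 1) = 4 * (u (j+1) - u j) - 4 := by
        show 4 * ((ksym j).val + 1) = 4 * (u (j+1) - u j) - 4
        omega
      rw [NAG_finRange_map_eq_range_map _ (fun col i2 => φI (i2, 4 * u j + 4 + col))
        (fun jj => rfl), hlen4]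
    rw [show 4 * (u (j+1) - u j) = 4 + (4 * (u (j+1) - u j) - 4) from by omega,
      NAG_range_map_split, hb, hcf]
    have h2nd : (List.range (4 * (u (j+1) - u j) - 4)).map
          (fun col i2 => φI (i2, 4 * u j + 4 + col))
        = (List.range (4 * (u (j+1) - u j) - 4)).map
          (fun q i2 => φI (i2, 4 * u j + (4 + q))) := by
      apply List.map_congr_left
      intro q hq
      funext i2
      exact congrArg (fun z => φI (i2, z)) (by omega)
    rw [h2nd]
  have key : ∀ q, i + q ≤ m →
      colsOf p ((W.drop i).take q)
        = (List.range (4 * (u (i+q) - u i))).map (fun col i2 => φI (i2, 4 * u i + col)) := by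
    intro q
    induction q with
    | zero => intro _; simp [colsOf]
    | succ q ihq =>
        intro hq
        have hq' : i + q ≤ m := by omega
        have hmono : u i ≤ u (i+q) := humono q i hq'
        have hmono2 : u (i+q) ≤ u (i+q+1) := by
          have := (hustep (i+q) (by omega)).1
          omega
        rw [List.take_succ, hWget q (by omega)]
        rw [show ((some (sym (i+q))).toList) = [sym (i+q)] from rfl]
        rw [NAG_colsOf_append, NAG_colsOf_single, ihq hq']
        rw [hchunk (i+q) (by omega)]
        rw [show i + (q+1) = (i+q)+1 from rfl]
        rw [show 4 * (u ((i+q)+1) - u i)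
            = 4 * (u (i+q) - u i) + 4 * (u ((i+q)+1) - u (i+q)) from by omega,
          NAG_range_map_split]
        have h2nd : (List.range (4 * (u ((i+q)+1) - u (i+q)))).map
              (fun col i2 => φI (i2, 4 * u (i+q) + col))
            = (List.range (4 * (u ((i+q)+1) - u (i+q)))).map
              (fun q2 i2 => φI (i2, 4 * u i + (4 * (u (i+q) - u i) + q2))) := by
          apply List.map_congr_left
          intro q2 hq2
          funext i2
          exact congrArg (fun z => φI (i2, z)) (by omega)
        rw [h2nd]
  have hLE : colsOf p s
      = (List.range (4 * (u (i+2*r) - u i))).map (fun col i2 => φI (i2, 4 * u i + col)) :=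
    key (2*r) hi2r
  have hMlen : (colsOf p s).length = 4 * (u (i+2*r) - u i) := by rw [hLE]; simp
  set Mtot : ℕ := 4 * u (i + 2*r) with hMtotdef
  have hui : u i ≤ u (i + 2*r) := humono (2*r) i hi2r
  -- choose a suitable n
  have hmemU : ({n | ∀ v : Fin 2 × Fin Mtot, ψ n (v.1, v.2.val) = φI (v.1, v.2.val)}
      ∩ {n | Mtot ≤ n}) ∈ U := by
    apply Filter.inter_mem
    · have heq : {n | ∀ v : Fin 2 × Fin Mtot, ψ n (v.1, v.2.val) = φI (v.1, v.2.val)}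
          = ⋂ v : Fin 2 × Fin Mtot, {n | ψ n (v.1, v.2.val) = φI (v.1, v.2.val)} := by
        ext n
        simp only [Set.mem_setOf_eq, Set.mem_iInter]
      rw [heq]
      exact Filter.iInter_mem.2 (fun v => hφI (v.1, v.2.val))
    · show {n | Mtot ≤ n} ∈ Filter.hyperfilter ℕ
      apply Filter.mem_hyperfilter_of_finite_compl
      apply Set.Finite.subset (Set.finite_lt_nat Mtot)
      intro n hn
      simp only [Set.mem_compl_iff, Set.mem_setOf_eq, not_le] at hn
      exact hn
  obtain ⟨n, hnmem⟩ := Ultrafilter.nonempty_of_mem hmemU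
  have hn1 : ∀ v : Fin 2 × Fin Mtot, ψ n (v.1, v.2.val) = φI (v.1, v.2.val) := hnmem.1
  have hn2 : Mtot ≤ n := hnmem.2
  -- embedding
  have hbound : ∀ v : Fin 2 × Fin ((colsOf p s).length), 4 * u i + v.2.val < n := by
    intro v
    have hv := v.2.isLt
    omega
  let e : Fin 2 × Fin ((colsOf p s).length) → Fin 2 × Fin n :=
    fun v => (v.1, ⟨4 * u i + v.2.val, hbound v⟩)
  have heinj : Function.Injective e := by
    intro a b hab
    have h1 : a.1 = b.1 := congrArg (fun x : Fin 2 × Fin n => x.1) hab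
    have h2 : (4 * u i + a.2.val) = (4 * u i + b.2.val) :=
      congrArg (fun x : Fin 2 × Fin n => (x.2 : ℕ)) hab
    exact Prod.ext h1 (Fin.ext (by omega))
  have headj : ∀ a b, (grid 2 ((colsOf p s).length)).Adj a b → (grid 2 n).Adj (e a) (e b) := by
    intro a b hab
    unfold grid at hab ⊢
    rw [SimpleGraph.boxProd_adj] at hab ⊢
    rcases hab with ⟨h1, h2⟩ | ⟨h1, h2⟩
    · left
      refine ⟨h1, ?_⟩
      show (⟨4 * u i + a.2.val, hbound a⟩ : Fin n) = ⟨4 * u i + b.2.val, hbound b⟩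
      apply Fin.ext
      simp only []
      rw [h2]
    · right
      rw [SimpleGraph.pathGraph_adj] at h1 ⊢
      constructor
      · show (4 * u i + a.2.val) + 1 = 4 * u i + b.2.val ∨ (4 * u i + b.2.val) + 1 = 4 * u i + a.2.val
        omega
      · exact h2
  have hcomp : phiOfSym p s = ((h n).choose) ∘ e := by
    funext v
    show (colsOf p s).get ⟨v.2.val, v.2.isLt⟩ v.1 = (h n).choose (e v)
    have hget : (colsOf p s).get ⟨v.2.val, v.2.isLt⟩ = fun i2 => φI (i2, 4 * u i + v.2.val) := by
      rw [List.get_eq_getElem]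
      rw [List.getElem_of_eq hLE]
      simp only [List.getElem_map, List.getElem_range]
    rw [hget]
    show φI (v.1, 4 * u i + v.2.val) = (h n).choose (e v)
    have hcol : 4 * u i + v.2.val < Mtot := by omega
    have hψ : ψ n (v.1, 4 * u i + v.2.val) = φI (v.1, 4 * u i + v.2.val) :=
      hn1 (v.1, ⟨4 * u i + v.2.val, hcol⟩)
    rw [← hψ]
    show (if hv : (4 * u i + v.2.val) < n
        then (h n).choose (v.1, ⟨4 * u i + v.2.val, hv⟩) else ⟨0, hc⟩)
      = (h n).choose (e v)
    rw [dif_pos (hbound v)]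
  refine ⟨r, by omega, s, hslen, htau, ?_⟩
  rw [hcomp]
  exact NAG_anagramFree_comp e heinj headj (hAF n)
end
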